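/- In a finite POMDP, the t-step optimal value function V_t* over beliefs is piecewise linear and convex: there exists a finite set Γ_t of vectors α : S → ℝ such that V_t*(b) = max_{α∈Γ_t} Σ_{s∈S} α(s) b(s) for all beliefs b. -/

import Mathlib

open Finset

private lemma sum_sup'_eq_sup'_pi {Z α : Type} [Fintype Z] [DecidableEq Z] (Γ : Finset α)
    (hΓ : Γ.Nonempty) (f : Z → α → ℝ) :
    ∑ z, Γ.sup' hΓ (f z) =
      (Fintype.piFinset (fun _ : Z => Γ)).sup'
        (Fintype.piFinset_nonempty.mpr (fun _ => hΓ)) (fun σ => ∑ z, f z (σ z)) := by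
  apply le_antisymm
  · choose g hg hge using fun z => Finset.exists_mem_eq_sup' hΓ (f z)
    have hmem : g ∈ Fintype.piFinset (fun _ : Z => Γ) :=
      Fintype.mem_piFinset.mpr hg
    calc ∑ z, Γ.sup' hΓ (f z) = ∑ z, f z (g z) :=
          Finset.sum_congr rfl (fun z _ => hge z)
      _ ≤ _ := Finset.le_sup' (fun σ => ∑ z, f z (σ z)) hmem
  · apply Finset.sup'_le
    intro σ hσ
    exact Finset.sum_le_sum fun z _ => Finset.le_sup' (f z) (Fintype.mem_piFinset.mp hσ z)

private lemma add_sup'_eq {α : Type} (s : Finset α) (h : s.Nonempty) (c : ℝ) (f : α → ℝ) :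
    c + s.sup' h f = s.sup' h (fun x => c + f x) :=
  Finset.comp_sup'_eq_sup'_comp h (fun x => c + x) (fun x y => (max_add_add_left c x y).symm)

private lemma mul_sup'_eq {α : Type} (s : Finset α) (h : s.Nonempty) {c : ℝ} (hc : 0 ≤ c)
    (f : α → ℝ) : c * s.sup' h f = s.sup' h (fun x => c * f x) :=
  Finset.comp_sup'_eq_sup'_comp h (fun x => c * x) (fun x y => mul_max_of_nonneg x y hc)

/-- In a finite POMDP, the `t`-step optimal belief value function `V_t*`
is piecewise linear and convex: it admits a finite α-vector representation
`V_t*(b) = max_{α ∈ Γ_t} Σ_s α(s) b(s)` for all beliefs `b`. -/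
theorem finite_horizon_value_is_PWLC
    {S A Z : Type} [Fintype S] [Fintype A] [Fintype Z] [Nonempty A]
    (P : S → A → S → ℝ) (R : S → A → ℝ) (O : A → S → Z → ℝ) (γ : ℝ)
    (hγ0 : 0 ≤ γ)
    (hP0 : ∀ s a s', 0 ≤ P s a s') (hP1 : ∀ s a, ∑ s', P s a s' = 1)
    (hO0 : ∀ a s' z, 0 ≤ O a s' z) (hO1 : ∀ a s', ∑ z, O a s' z = 1)
    -- the finite-horizon optimal belief value functions, defined by the Bellman recursion
    (V : ℕ → (S → ℝ) → ℝ)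
    (hV0 : ∀ b : S → ℝ, (∀ s, 0 ≤ b s) → (∑ s, b s) = 1 →
      V 0 b = univ.sup' univ_nonempty (fun a => ∑ s, b s * R s a))
    (hVrec : ∀ t : ℕ, ∀ b : S → ℝ, (∀ s, 0 ≤ b s) → (∑ s, b s) = 1 →
      V (t + 1) b = univ.sup' univ_nonempty (fun a =>
        (∑ s, b s * R s a) +
        γ * ∑ z, (∑ s', O a s' z * ∑ s, P s a s' * b s) *
          V t (fun s' => (O a s' z * ∑ s, P s a s' * b s) /
            (∑ s'', O a s'' z * ∑ s, P s a s'' * b s)))) :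
    ∀ t : ℕ, ∃ Γ : Finset (S → ℝ), ∃ hΓ : Γ.Nonempty,
      ∀ b : S → ℝ, (∀ s, 0 ≤ b s) → (∑ s, b s) = 1 →
        V t b = Γ.sup' hΓ (fun α => ∑ s, α s * b s) := by
  classical
  intro t
  induction t with
  | zero =>
      refine ⟨Finset.image (fun a s => R s a) univ,
        (univ_nonempty).image _, ?_⟩
      intro b hb hb1
      rw [hV0 b hb hb1, Finset.sup'_image]
      apply Finset.sup'_congr _ rfl
      intro a _
      exact Finset.sum_congr rfl fun s _ => mul_comm (b s) (R s a)
  | succ t ih =>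
      obtain ⟨Γ, hΓ, hΓV⟩ := ih
      have hΓZne : (Fintype.piFinset (fun _ : Z => Γ)).Nonempty :=
        Fintype.piFinset_nonempty.mpr (fun _ => hΓ)
      refine ⟨Finset.image (fun p : A × (Z → S → ℝ) => fun s =>
          R s p.1 + γ * ∑ z, ∑ s', P s p.1 s' * O p.1 s' z * p.2 z s')
          (univ ×ˢ Fintype.piFinset (fun _ : Z => Γ)),
        ((univ_nonempty).product hΓZne).image _, ?_⟩
      intro b hb hb1
      rw [hVrec t b hb hb1, Finset.sup'_image, Finset.sup'_product_left]
      apply Finset.sup'_congr _ rfl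
      intro a _
      -- abbreviations
      set c : Z → S → ℝ := fun z s' => O a s' z * ∑ s, P s a s' * b s with hcdef
      have hc : ∀ z s', 0 ≤ c z s' := fun z s' =>
        mul_nonneg (hO0 a s' z) (Finset.sum_nonneg fun s _ => mul_nonneg (hP0 s a s') (hb s))
      have key : ∀ z, (∑ s', c z s') * V t (fun s' => c z s' / ∑ s'', c z s'')
          = Γ.sup' hΓ (fun α => ∑ s', α s' * c z s') := by
        intro z
        rcases eq_or_lt_of_le (Finset.sum_nonneg (fun s' (_ : s' ∈ univ) => hc z s')) with h0 | hpos
        · have hz : ∀ s', c z s' = 0 := fun s' =>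
            (Finset.sum_eq_zero_iff_of_nonneg (fun s' _ => hc z s')).mp h0.symm s' (mem_univ s')
          rw [← h0, zero_mul]
          have : (fun α : S → ℝ => ∑ s', α s' * c z s') = fun _ => (0:ℝ) := by
            funext α; simp [hz]
          rw [this, Finset.sup'_const]
        · have hne : (∑ x, c z x) ≠ 0 := ne_of_gt hpos
          have hbel : ∀ s', 0 ≤ c z s' / ∑ x, c z x := fun s' =>
            div_nonneg (hc z s') hpos.le
          have hsum1 : ∑ s', c z s' / ∑ x, c z x = 1 := by
            rw [← Finset.sum_div]; exact div_self hne
          rw [hΓV _ hbel hsum1, mul_sup'_eq Γ hΓ hpos.le]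
          apply Finset.sup'_congr hΓ rfl
          intro α _
          rw [Finset.mul_sum]
          refine Finset.sum_congr rfl fun s' _ => ?_
          field_simp
      rw [Finset.sum_congr rfl fun z _ => key z]
      rw [sum_sup'_eq_sup'_pi Γ hΓ (fun z α => ∑ s', α s' * c z s'),
        mul_sup'_eq _ hΓZne hγ0, add_sup'_eq]
      apply Finset.sup'_congr _ rfl
      intro σ hσ
      show _ = ∑ s, (R s a + γ * ∑ z, ∑ s', P s a s' * O a s' z * σ z s') * b s
      simp only [hcdef, add_mul, Finset.sum_add_distrib, Finset.mul_sum, Finset.sum_mul]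
      congr 1
      · exact Finset.sum_congr rfl fun s _ => mul_comm _ _
      · refine Eq.symm ?_
        rw [Finset.sum_comm]
        refine Finset.sum_congr rfl fun z _ => ?_
        rw [Finset.sum_comm]
        exact Finset.sum_congr rfl fun s' _ => Finset.sum_congr rfl fun s _ => by ring
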